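/- For every graph G, every vertex v, and every parameter r ∈ ℕ, every cycle of the ball B_{r/2}(v) is generated (over 𝔽₂, in the cycle space) by cycles of length at most r contained in B_{r/2}(v). -/

import Mathlib

open SimpleGraph

set_option maxHeartbeats 1000000

universe u

namespace LocalSep

variable {V : Type u}

/-- The ball of radius `r/2` around `v`: vertices of distance at most `⌊r/2⌋` from `v`;
if `r` is even, edges joining two vertices of distance exactly `r/2` are removed. -/
def ballVerts (G : SimpleGraph V) (v : V) (r : ℕ) : Set V :=
  {u | G.Reachable v u ∧ G.dist v u ≤ r / 2}

def ball (G : SimpleGraph V) (v : V) (r : ℕ) : G.Subgraph where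
  verts := ballVerts G v r
  Adj u u' := G.Adj u u' ∧ u ∈ ballVerts G v r ∧ u' ∈ ballVerts G v r ∧
    (Even r → ¬(G.dist v u = r / 2 ∧ G.dist v u' = r / 2))
  adj_sub h := h.1
  edge_vert h := h.2.1
  symm := ⟨fun u u' h => ⟨h.1.symm, h.2.2.1, h.2.1, fun he hc => h.2.2.2 he ⟨hc.2, hc.1⟩⟩⟩

/-- `v` is an `r`-local cutvertex if the punctured ball `B_{r/2}(v) - v` is disconnected. -/
def IsLocalCutvertex (G : SimpleGraph V) (r : ℕ) (v : V) : Prop :=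
  ¬ ((ball G v r).deleteVerts {v}).coe.Connected

def HasShortCycle (G : SimpleGraph V) (r : ℕ) : Prop :=
  ∃ (u : V) (c : G.Walk u u), c.IsCycle ∧ c.length ≤ r

/-- A connected graph is `r`-locally 2-connected if it has no `r`-local cutvertex
and contains a cycle of length at most `r`. -/
def LocallyTwoConnected (G : SimpleGraph V) (r : ℕ) : Prop :=
  G.Connected ∧ (∀ v : V, ¬ IsLocalCutvertex G r v) ∧ HasShortCycle G r

/-- The core of `(a₁, a₂)`: all vertices on shortest `a₁`–`a₂` paths. -/
def core (G : SimpleGraph V) (a₁ a₂ : V) : Set V :=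
  {x | ∃ p : G.Walk a₁ a₂, p.IsPath ∧ p.length = G.dist a₁ a₂ ∧ x ∈ p.support}

/-- A walk is contained in a subgraph. -/
def WalkIn {G : SimpleGraph V} (B : G.Subgraph) {x y : V} (p : G.Walk x y) : Prop :=
  p.toSubgraph ≤ B

/-- The label of a vertex `u` in a ball `B`: the set of (supports of) shortest paths
from the core `C` to `u` contained in `B`. -/
def labelIn (G : SimpleGraph V) (B : G.Subgraph) (C : Set V) (u : V) : Set (List V) :=
  {l | ∃ c ∈ C, ∃ p : G.Walk c u, p.IsPath ∧ WalkIn B p ∧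
    (∀ c' ∈ C, ∀ q : G.Walk c' u, q.IsPath → WalkIn B q → p.length ≤ q.length) ∧
    l = p.support}

/-- A potential vertex of the explorer-neighbourhood: a vertex together with a label. -/
abbrev EVert (V : Type u) : Type u := V × Set (List V)

/-- `p` is the copy of the vertex `p.1` in the labelled ball around `a ∈ {a₁, a₂}`. -/
def inCopy (G : SimpleGraph V) (a₁ a₂ : V) (r : ℕ) (a : V) (p : EVert V) : Prop :=
  p.1 ∈ ballVerts G a r ∧ p.2 = labelIn G (ball G a r) (core G a₁ a₂) p.1

/-- Vertices of the explorer-neighbourhood `Expl(a₁,a₂)`. -/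
def explVerts (G : SimpleGraph V) (a₁ a₂ : V) (r : ℕ) : Set (EVert V) :=
  {p | inCopy G a₁ a₂ r a₁ p ∨ inCopy G a₁ a₂ r a₂ p}

/-- The explorer-neighbourhood `Expl(a₁,a₂)`: the union of the two labelled balls,
where two copies of a vertex are identified iff their labels agree. -/
def expl (G : SimpleGraph V) (a₁ a₂ : V) (r : ℕ) : SimpleGraph (EVert V) where
  Adj p q :=
    (inCopy G a₁ a₂ r a₁ p ∧ inCopy G a₁ a₂ r a₁ q ∧ (ball G a₁ r).Adj p.1 q.1) ∨
    (inCopy G a₁ a₂ r a₂ p ∧ inCopy G a₁ a₂ r a₂ q ∧ (ball G a₂ r).Adj p.1 q.1)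
  symm := by
    refine ⟨fun p q h => ?_⟩
    rcases h with ⟨h1, h2, h3⟩ | ⟨h1, h2, h3⟩
    · exact Or.inl ⟨h2, h1, h3.symm⟩
    · exact Or.inr ⟨h2, h1, h3.symm⟩
  loopless := by
    refine ⟨fun p h => ?_⟩
    rcases h with ⟨-, -, h⟩ | ⟨-, -, h⟩ <;> exact G.ne_of_adj h.adj_sub rfl

/-- Vertices of the punctured explorer-neighbourhood `Expl(a₁,a₂) - a₁ - a₂`. -/
def pexplVerts (G : SimpleGraph V) (a₁ a₂ : V) (r : ℕ) : Set (EVert V) :=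
  {p | p ∈ explVerts G a₁ a₂ r ∧ p.1 ≠ a₁ ∧ p.1 ≠ a₂}

/-- The punctured explorer-neighbourhood `Expl(a₁,a₂) - a₁ - a₂`. -/
def pexpl (G : SimpleGraph V) (a₁ a₂ : V) (r : ℕ) :
    SimpleGraph (pexplVerts G a₁ a₂ r) :=
  SimpleGraph.induce (pexplVerts G a₁ a₂ r) (expl G a₁ a₂ r)

/-- `{v,w}` is an `r`-local 2-separator: `v,w` have distance at most `r/2` and the
punctured explorer-neighbourhood is disconnected. -/
def IsLocalTwoSep (G : SimpleGraph V) (r : ℕ) (v w : V) : Prop :=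
  v ≠ w ∧ G.Reachable v w ∧ 2 * G.dist v w ≤ r ∧ ¬ (pexpl G v w r).Connected

/-- The pair `(p,q)` of vertices of `Expl(b₁,b₂)` crosses the local 2-separator `{b₁,b₂}`:
they lie in different components of the punctured explorer-neighbourhood and there is a cycle
of length at most `r` through them containing a copy of `b₁` or `b₂`. -/
def CrossesPair (G : SimpleGraph V) (r : ℕ) (b₁ b₂ : V) (p q : EVert V) : Prop :=
  ∃ (hp : p ∈ pexplVerts G b₁ b₂ r) (hq : q ∈ pexplVerts G b₁ b₂ r),
    ¬ (pexpl G b₁ b₂ r).Reachable ⟨p, hp⟩ ⟨q, hq⟩ ∧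
    ∃ (u : EVert V) (c : (expl G b₁ b₂ r).Walk u u), c.IsCycle ∧ c.length ≤ r ∧
      p ∈ c.support ∧ q ∈ c.support ∧ ∃ z ∈ c.support, z.1 = b₁ ∨ z.1 = b₂

/-- `{a₁,a₂}` crosses `{b₁,b₂}`: some copies of `a₁`, `a₂` cross `{b₁,b₂}`. -/
def Crosses (G : SimpleGraph V) (r : ℕ) (a₁ a₂ b₁ b₂ : V) : Prop :=
  ∃ p q : EVert V, p.1 = a₁ ∧ q.1 = a₂ ∧ CrossesPair G r b₁ b₂ p q

/-- Some copy of `x` lies in the same component of `Expl(v,w) - v - w` as some copy of `y`. -/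
def CopyReach (G : SimpleGraph V) (r : ℕ) (v w x y : V) : Prop :=
  ∃ (p q : EVert V) (hp : p ∈ pexplVerts G v w r) (hq : q ∈ pexplVerts G v w r),
    p.1 = x ∧ q.1 = y ∧ (pexpl G v w r).Reachable ⟨p, hp⟩ ⟨q, hq⟩

/-- A cycle through `a₁` alternating between `{a₁,a₂}` and `{b₁,b₂}`: the four vertices are
distinct and `b₁`, `b₂` lie on different arcs of the cycle between `a₁` and `a₂`. -/
def AltCycle (G : SimpleGraph V) (a₁ a₂ b₁ b₂ : V) (c : G.Walk a₁ a₁) : Prop :=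
  c.IsCycle ∧ b₁ ≠ b₂ ∧ b₁ ∉ ({a₁, a₂} : Set V) ∧ b₂ ∉ ({a₁, a₂} : Set V) ∧
  ∃ (p : G.Walk a₁ a₂) (q : G.Walk a₂ a₁), c = p.append q ∧
    ((b₁ ∈ p.support ∧ b₂ ∈ q.support) ∨ (b₂ ∈ p.support ∧ b₁ ∈ q.support))

/-- `S` is generated over `𝔽₂` by members of `C` (sum = symmetric difference). -/
def GeneratedBy {α : Type*} (C : Set (Set (Sym2 α))) (S : Set (Sym2 α)) : Prop :=
  ∃ l : List (Set (Sym2 α)), (∀ A ∈ l, A ∈ C) ∧ l.foldr symmDiff ∅ = S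

/-- The edge set of a walk. -/
def walkEdgeSet {α : Type*} {H : SimpleGraph α} {x y : α} (c : H.Walk x y) : Set (Sym2 α) :=
  {e | e ∈ c.edges}


/-! ### Auxiliary machinery for stmt2 -/

open scoped symmDiff

/-- Parity (mod 2) of a list of elements, as a set. -/
def lparity {β : Type*} (l : List β) : Set β := l.foldr (fun e S => {e} ∆ S) ∅

lemma empty_symmDiff' {β : Type*} (s : Set β) : (∅ : Set β) ∆ s = s := by
  rw [← Set.bot_eq_empty]; exact bot_symmDiff s

lemma symmDiff_empty' {β : Type*} (s : Set β) : s ∆ (∅ : Set β) = s := by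
  rw [← Set.bot_eq_empty]; exact symmDiff_bot s

lemma symmDiff_self' {β : Type*} (s : Set β) : s ∆ s = (∅ : Set β) := by
  rw [symmDiff_self, Set.bot_eq_empty]

lemma lparity_nil {β : Type*} : lparity ([] : List β) = ∅ := rfl

lemma lparity_cons {β : Type*} (e : β) (l : List β) :
    lparity (e :: l) = {e} ∆ lparity l := rfl

lemma lparity_append {β : Type*} (l₁ l₂ : List β) :
    lparity (l₁ ++ l₂) = lparity l₁ ∆ lparity l₂ := by
  induction l₁ with
  | nil => rw [List.nil_append, lparity_nil, empty_symmDiff']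
  | cons e l ih => rw [List.cons_append, lparity_cons, lparity_cons, ih, symmDiff_assoc]

lemma lparity_perm {β : Type*} {l₁ l₂ : List β} (h : l₁.Perm l₂) :
    lparity l₁ = lparity l₂ := by
  induction h with
  | nil => rfl
  | cons x _ ih => rw [lparity_cons, lparity_cons, ih]
  | swap x y l => rw [lparity_cons, lparity_cons, lparity_cons, lparity_cons, symmDiff_left_comm]
  | trans _ _ ih₁ ih₂ => exact ih₁.trans ih₂

lemma lparity_nodup {β : Type*} {l : List β} (h : l.Nodup) :
    lparity l = {e | e ∈ l} := by
  induction l with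
  | nil => rw [lparity_nil]; ext a; simp
  | cons e l ih =>
    obtain ⟨he, hl⟩ := List.nodup_cons.mp h
    rw [lparity_cons, ih hl]
    ext a
    simp only [Set.mem_symmDiff, Set.mem_singleton_iff, Set.mem_setOf_eq, List.mem_cons]
    constructor
    · rintro (⟨rfl, -⟩ | ⟨h1, -⟩) <;> tauto
    · rintro (rfl | h1)
      · exact Or.inl ⟨rfl, he⟩
      · exact Or.inr ⟨h1, fun hea => he (hea ▸ h1)⟩

lemma symmDiff_key {β : Type*} (A B M Q E : Set β) :
    A ∆ (B ∆ (E ∆ Q)) = (A ∆ (E ∆ M)) ∆ (M ∆ (B ∆ Q)) := by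
  ext e
  simp only [Set.mem_symmDiff]
  tauto

lemma generatedBy_empty {α : Type*} (C : Set (Set (Sym2 α))) : GeneratedBy C ∅ :=
  ⟨[], by simp, rfl⟩

lemma generatedBy_mem {α : Type*} {C : Set (Set (Sym2 α))} {S : Set (Sym2 α)} (h : S ∈ C) :
    GeneratedBy C S :=
  ⟨[S], by simp [h], by simp only [List.foldr]; exact symmDiff_empty' S⟩

lemma foldr_symmDiff_init {α : Type*} (l : List (Set (Sym2 α))) (b : Set (Sym2 α)) :
    l.foldr symmDiff b = (l.foldr symmDiff ∅) ∆ b := by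
  induction l with
  | nil => exact (empty_symmDiff' b).symm
  | cons A l ih => simp only [List.foldr]; rw [ih, symmDiff_assoc]

lemma generatedBy_symmDiff {α : Type*} {C : Set (Set (Sym2 α))} {S T : Set (Sym2 α)}
    (hS : GeneratedBy C S) (hT : GeneratedBy C T) : GeneratedBy C (S ∆ T) := by
  obtain ⟨l₁, h₁, e₁⟩ := hS
  obtain ⟨l₂, h₂, e₂⟩ := hT
  refine ⟨l₁ ++ l₂, ?_, ?_⟩
  · intro A hA
    rcases List.mem_append.mp hA with h | h
    exacts [h₁ A h, h₂ A h]
  · rw [List.foldr_append, foldr_symmDiff_init, e₁, e₂]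

/-- The set of edges used an odd number of times by a walk. -/
def oddE {W : Type u} {H : SimpleGraph W} {x y : W} (w : H.Walk x y) : Set (Sym2 W) :=
  lparity w.edges

lemma oddE_nil {W : Type u} {H : SimpleGraph W} {x : W} :
    oddE (Walk.nil : H.Walk x x) = ∅ := rfl

lemma oddE_cons {W : Type u} {H : SimpleGraph W} {x y z : W} (h : H.Adj x y)
    (q : H.Walk y z) : oddE (Walk.cons h q) = {s(x, y)} ∆ oddE q := by
  unfold oddE; rw [Walk.edges_cons, lparity_cons]

lemma oddE_append {W : Type u} {H : SimpleGraph W} {x y z : W} (p : H.Walk x y)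
    (q : H.Walk y z) : oddE (p.append q) = oddE p ∆ oddE q := by
  unfold oddE; rw [Walk.edges_append, lparity_append]

lemma oddE_reverse {W : Type u} {H : SimpleGraph W} {x y : W} (p : H.Walk x y) :
    oddE p.reverse = oddE p := by
  unfold oddE; rw [Walk.edges_reverse]; exact lparity_perm (List.reverse_perm _)

lemma oddE_eq_walkEdgeSet {W : Type u} {H : SimpleGraph W} {x y : W} {p : H.Walk x y}
    (h : p.edges.Nodup) : oddE p = walkEdgeSet p :=
  lparity_nodup h

/-- For a path from `x` to `u` containing the edge `{u,x}`, the parity edge set is that edge. -/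
lemma oddE_of_isPath_mem {W : Type u} {H : SimpleGraph W} {x u : W} (p : H.Walk x u)
    (hp : p.IsPath) (he : s(u, x) ∈ p.edges) : oddE p = {s(u, x)} := by
  cases p with
  | nil => simp [Walk.edges_nil] at he
  | cons h q =>
    rename_i y
    rw [Walk.edges_cons, List.mem_cons] at he
    obtain ⟨hq, hxq⟩ := (Walk.cons_isPath_iff h q).mp hp
    rcases he with he | he
    · have hne : x ≠ u := by
        rintro rfl
        exact hxq (q.end_mem_support)
      rw [Sym2.eq_iff] at he
      rcases he with ⟨rfl, rfl⟩ | ⟨rfl, -⟩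
      · exact absurd rfl hne
      · -- u = y, so q is a path from u to u, hence nil
        have : q = Walk.nil := Walk.isPath_iff_eq_nil.mp hq
        subst this
        rw [oddE_cons, oddE_nil, symmDiff_empty', Sym2.eq_swap]
    · exact absurd (q.snd_mem_support_of_mem_edges he) hxq

/-- Every closed walk of length at most `L` has parity edge set generated by
cycles of length at most `L`. -/
lemma decomp {W : Type u} {H : SimpleGraph W} (L : ℕ) :
    ∀ (n : ℕ) (u : W) (w : H.Walk u u), w.length ≤ n → w.length ≤ L →
      GeneratedBy {S | ∃ (x : W) (d : H.Walk x x), d.IsCycle ∧ d.length ≤ L ∧ S = walkEdgeSet d}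
        (oddE w) := by
  intro n
  induction n with
  | zero =>
    intro u w hn _
    have h0 : w.edges = [] := List.length_eq_zero_iff.mp (by rw [w.length_edges]; omega)
    unfold oddE
    rw [h0, lparity_nil]
    exact generatedBy_empty _
  | succ n ih =>
    intro u w hn hL
    classical
    by_cases hnd : w.support.tail.Nodup
    · cases w with
      | nil => rw [oddE_nil]; exact generatedBy_empty _
      | cons h p =>
        rename_i x
        rw [Walk.support_cons, List.tail_cons] at hnd
        have hp : p.IsPath := (Walk.isPath_def p).mpr hnd
        by_cases he : s(u, x) ∈ p.edges
        · rw [oddE_cons, oddE_of_isPath_mem p hp he, symmDiff_self']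
          exact generatedBy_empty _
        · have hcyc : (Walk.cons h p).IsCycle := (Walk.cons_isCycle_iff p h).mpr ⟨hp, he⟩
          rw [oddE_eq_walkEdgeSet hcyc.isCircuit.isTrail.edges_nodup]
          exact generatedBy_mem ⟨u, _, hcyc, hL, rfl⟩
    · obtain ⟨y, hy⟩ := List.exists_duplicate_iff_not_nodup.mpr hnd
      have hcount : 2 ≤ w.support.tail.count y := List.duplicate_iff_two_le_count.mp hy
      have hymem : y ∈ w.support := List.mem_of_mem_tail hy.mem
      have hodd : oddE (w.rotate y hymem) = oddE w := lparity_perm (w.rotate_edges y hymem).perm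
      have hlen : (w.rotate y hymem).length = w.length := by
        have h1 := (w.rotate_edges y hymem).perm.length_eq
        rwa [(w.rotate y hymem).length_edges, w.length_edges] at h1
      have hcount' : 2 ≤ (w.rotate y hymem).support.tail.count y := by
        rw [(w.support_rotate y hymem).perm.count_eq]; exact hcount
      have hwpos : 0 < w.length := by
        have h2 := hcount.trans List.count_le_length
        rw [List.length_tail, w.length_support, Nat.add_sub_cancel] at h2
        omega
      obtain ⟨x', h', p', hw⟩ := Walk.not_nil_iff.mp
        (by rw [Walk.not_nil_iff_lt_length, hlen]; exact hwpos)
      rw [← hodd, hw]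
      rw [hw] at hcount' hlen
      rw [Walk.support_cons, List.tail_cons] at hcount'
      have hyp' : y ∈ p'.support := by
        have : 0 < p'.support.count y := by omega
        exact List.count_pos_iff.mp this
      have hspec := p'.take_spec hyp'
      have hct : (p'.takeUntil y hyp').support.count y = 1 :=
        p'.count_support_takeUntil_eq_one hyp'
      have hsupp : p'.support = (p'.takeUntil y hyp').support ++ (p'.dropUntil y hyp').support.tail := by
        conv_lhs => rw [← hspec]
        rw [Walk.support_append]
      have hd1 : 1 ≤ (p'.dropUntil y hyp').support.tail.count y := by
        rw [hsupp, List.count_append] at hcount'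
        omega
      have hdlen : 1 ≤ (p'.dropUntil y hyp').length := by
        have h2 := hd1.trans List.count_le_length
        rwa [List.length_tail, (p'.dropUntil y hyp').length_support, Nat.add_sub_cancel] at h2
      have hlensum : (p'.takeUntil y hyp').length + (p'.dropUntil y hyp').length = p'.length := by
        have := congrArg Walk.length hspec
        rwa [Walk.length_append] at this
      have e1 : oddE (Walk.cons h' p')
          = oddE (Walk.cons h' (p'.takeUntil y hyp')) ∆ oddE (p'.dropUntil y hyp') := by
        conv_lhs => rw [← hspec, ← Walk.cons_append]
        rw [oddE_append]
      have hp'len : p'.length + 1 = w.length := by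
        rw [← hlen, Walk.length_cons]
      rw [e1]
      refine generatedBy_symmDiff (ih y _ ?_ ?_) (ih y _ ?_ ?_)
      · rw [Walk.length_cons]; omega
      · rw [Walk.length_cons]; omega
      · omega
      · omega

lemma ball_adj_bound {V : Type u} {G : SimpleGraph V} {v : V} {r : ℕ} {a b : V}
    (h : (ball G v r).Adj a b) : G.dist v a + G.dist v b + 1 ≤ r := by
  obtain ⟨-, ⟨-, ha⟩, ⟨-, hb⟩, hev⟩ := h
  rcases Nat.even_or_odd r with he | ho
  · have hne := hev he
    obtain ⟨k, hk⟩ := he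
    subst hk
    omega
  · obtain ⟨k, hk⟩ := ho
    subst hk
    omega

lemma exists_geodesic {V : Type u} (G : SimpleGraph V) (v : V) (r : ℕ)
    (hv : v ∈ (ball G v r).verts) :
    ∀ (d : ℕ) (x : V) (hx : x ∈ (ball G v r).verts), G.dist v x = d →
      ∃ p : (ball G v r).coe.Walk ⟨v, hv⟩ ⟨x, hx⟩, p.length = d := by
  intro d
  induction d with
  | zero =>
    intro x hx hdist
    have hx' : G.Reachable v x ∧ G.dist v x ≤ r / 2 := hx
    have hxv : v = x := (hx'.1.dist_eq_zero_iff).mp hdist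
    subst hxv
    exact ⟨Walk.nil, rfl⟩
  | succ d ih =>
    intro x hx hdist
    have hx' : G.Reachable v x ∧ G.dist v x ≤ r / 2 := hx
    obtain ⟨p, hp⟩ := hx'.1.exists_walk_length_eq_dist
    cases hrev : p.reverse with
    | nil =>
      have := congrArg Walk.length hrev
      rw [Walk.length_reverse, hp, hdist] at this
      simp at this
    | cons h q =>
      rename_i z
      have hq : q.length = d := by
        have h1 := congrArg Walk.length hrev
        rw [Walk.length_reverse, hp, hdist, Walk.length_cons] at h1
        omega
      have hreach_z : G.Reachable v z := ⟨q.reverse⟩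
      have hdz_le : G.dist v z ≤ d := by
        have h1 := SimpleGraph.dist_le q.reverse
        rwa [Walk.length_reverse, hq] at h1
      have hdz : G.dist v z = d := by
        obtain ⟨q0, hq0⟩ := hreach_z.exists_walk_length_eq_dist
        have h1 := SimpleGraph.dist_le (q0.concat h.symm)
        rw [Walk.length_concat, hq0, hdist] at h1
        omega
      have hz : z ∈ (ball G v r).verts := ⟨hreach_z, by rw [hdz]; omega⟩
      obtain ⟨p0, hp0⟩ := ih z hz hdz
      have hadj : (ball G v r).Adj z x := by
        refine ⟨h.symm, hz, hx, fun _ hcon => ?_⟩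
        rw [hdz] at hcon
        rw [hdist] at hcon
        omega
      refine ⟨p0.concat ((Subgraph.coe_adj _ _ _).mpr hadj), ?_⟩
      rw [Walk.length_concat, hp0]


/-- Every cycle of the ball `B_{r/2}(v)` is generated over `𝔽₂` by the cycles of length at
most `r` contained in `B_{r/2}(v)`. -/
theorem stmt2 {V : Type u} (G : SimpleGraph V) (v : V) (r : ℕ)
    {u : (ball G v r).verts} (c : (ball G v r).coe.Walk u u) (hc : c.IsCycle) :
    GeneratedBy
      {S | ∃ (w : (ball G v r).verts) (d : (ball G v r).coe.Walk w w),
        d.IsCycle ∧ d.length ≤ r ∧ S = walkEdgeSet d}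
      (walkEdgeSet c) := by
  classical
  have hv : v ∈ (ball G v r).verts :=
    ⟨Reachable.refl v, by rw [SimpleGraph.dist_self]; omega⟩
  have geo : ∀ x : (ball G v r).verts,
      ∃ p : (ball G v r).coe.Walk ⟨v, hv⟩ x, p.length = G.dist v x.1 := by
    rintro ⟨x, hx⟩
    exact exists_geodesic G v r hv (G.dist v x) x hx rfl
  choose P hP using geo
  have tele : ∀ {a b : (ball G v r).verts} (p : (ball G v r).coe.Walk a b),
      GeneratedBy
        {S | ∃ (w : (ball G v r).verts) (d : (ball G v r).coe.Walk w w),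
          d.IsCycle ∧ d.length ≤ r ∧ S = walkEdgeSet d}
        (oddE (P a) ∆ (oddE (P b) ∆ oddE p)) := by
    intro a b p
    induction p with
    | nil =>
      rw [oddE_nil, symmDiff_empty', symmDiff_self']
      exact generatedBy_empty _
    | cons h q ihq =>
      rename_i a' m b'
      have hadj : (ball G v r).Adj a'.1 m.1 := (Subgraph.coe_adj _ _ _).mp h
      have hTlen : ((P a').append (Walk.cons h ((P m).reverse))).length ≤ r := by
        rw [Walk.length_append, Walk.length_cons, Walk.length_reverse, hP a', hP m]
        have := ball_adj_bound hadj
        omega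
      have hTgen := decomp r ((P a').append (Walk.cons h ((P m).reverse))).length
        (⟨v, hv⟩ : (ball G v r).verts)
        ((P a').append (Walk.cons h ((P m).reverse))) le_rfl hTlen
      have hTodd : oddE ((P a').append (Walk.cons h ((P m).reverse)))
          = oddE (P a') ∆ ({s(a', m)} ∆ oddE (P m)) := by
        rw [oddE_append, oddE_cons, oddE_reverse]
      rw [hTodd] at hTgen
      have hmain := generatedBy_symmDiff hTgen ihq
      have key : oddE (P a') ∆ (oddE (P b') ∆ oddE (Walk.cons h q))
          = (oddE (P a') ∆ ({s(a', m)} ∆ oddE (P m)))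
            ∆ (oddE (P m) ∆ (oddE (P b') ∆ oddE q)) := by
        rw [oddE_cons]
        exact symmDiff_key _ _ _ _ _
      rw [key]
      exact hmain
  have h1 := tele c
  rw [symmDiff_symmDiff_cancel_left] at h1
  rwa [oddE_eq_walkEdgeSet hc.isCircuit.isTrail.edges_nodup] at h1

end LocalSep
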